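/- Let G be a finite simple graph on {x_1,...,x_n} with no isolated vertex, let {x_i,x_j} be an edge of G, and let S be an independent set of G such that no vertex of S is adjacent to x_i or to x_j. Suppose moreover that every vertex of G outside S ∪ {x_i, x_j} is adjacent to some vertex in S ∪ {x_i, x_j}. Define the graph G' = G^{{x_i,x_j},S} by adding a new vertex x_{n+1} adjacent to all vertices x_k with x_k ≠ x_i, x_k ≠ x_j and x_k ∉ S. Then im(G') = im(G). -/
import Mathlib


open MvPolynomial PowerSeries

/-- A matching of a simple graph: a set of pairwise disjoint edges. -/
def IsMatchingSet {V : Type*} (G : SimpleGraph V) (M : Finset (Sym2 V)) : Prop :=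
  (↑M : Set (Sym2 V)) ⊆ G.edgeSet ∧
    ∀ e ∈ M, ∀ f ∈ M, e ≠ f → ∀ v, v ∈ e → v ∉ f

/-- An induced matching: a matching such that no edge of `G` meets two distinct
edges of the matching. -/
def IsInducedMatchingSet {V : Type*} (G : SimpleGraph V) (M : Finset (Sym2 V)) : Prop :=
  IsMatchingSet G M ∧
    ∀ e ∈ G.edgeSet, ∀ f ∈ M, ∀ g ∈ M, f ≠ g →
      ¬((∃ v, v ∈ e ∧ v ∈ f) ∧ (∃ w, w ∈ e ∧ w ∈ g))

/-- The matching number `m(G)`. -/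
noncomputable def matchNum {V : Type*} (G : SimpleGraph V) : ℕ :=
  sSup {k | ∃ M : Finset (Sym2 V), IsMatchingSet G M ∧ M.card = k}

/-- The induced matching number `im(G)`. -/
noncomputable def indMatchNum {V : Type*} (G : SimpleGraph V) : ℕ :=
  sSup {k | ∃ M : Finset (Sym2 V), IsInducedMatchingSet G M ∧ M.card = k}

/-- The `S`-suspension `G^S`: add a new vertex (`none`) joined to every vertex not in `S`. -/
def sSusp {V : Type*} (G : SimpleGraph V) (S : Set V) : SimpleGraph (Option V) :=
  SimpleGraph.fromRel (fun a b =>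
    (∃ x y, a = some x ∧ b = some y ∧ G.Adj x y) ∨
    (a = none ∧ ∃ y, b = some y ∧ y ∉ S))

/-- The `{x_i,x_j}, S`-suspension: add a new vertex (`none`) joined to every vertex
outside `S ∪ {i, j}`. -/
def eSusp {V : Type*} (G : SimpleGraph V) (i j : V) (S : Set V) : SimpleGraph (Option V) :=
  SimpleGraph.fromRel (fun a b =>
    (∃ x y, a = some x ∧ b = some y ∧ G.Adj x y) ∨
    (a = none ∧ ∃ y, b = some y ∧ y ∉ S ∧ y ≠ i ∧ y ≠ j))

/-- The edge ideal of a graph. -/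
noncomputable def edgeIdeal (K : Type*) [Field K] {σ : Type*} (G : SimpleGraph σ) :
    Ideal (MvPolynomial σ K) :=
  Ideal.span {p | ∃ i j, G.Adj i j ∧ p = X i * X j}

/-- The Hilbert function of `R/I` (standard grading). -/
noncomputable def hilbFun (K : Type*) [Field K] {σ : Type*}
    (I : Ideal (MvPolynomial σ K)) (n : ℕ) : ℕ :=
  Module.finrank K ((homogeneousSubmodule σ K n).map
    (Ideal.Quotient.mkₐ K I).toLinearMap)

/-- The Hilbert series of `R/I`, as a power series over `ℚ`. -/
noncomputable def hilbSeries (K : Type*) [Field K] {σ : Type*}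
    (I : Ideal (MvPolynomial σ K)) : PowerSeries ℚ :=
  PowerSeries.mk fun n => (hilbFun K I n : ℚ)

/-- `HilbEq K I d h` says that the Hilbert series of `R/I` equals `h(λ)/(1-λ)^d`
with `h(1) ≠ 0`, i.e. `h` is the `h`-polynomial and `d = dim R/I`. -/
def HilbEq (K : Type*) [Field K] {σ : Type*} (I : Ideal (MvPolynomial σ K))
    (d : ℕ) (h : Polynomial ℤ) : Prop :=
  hilbSeries K I * (1 - PowerSeries.X) ^ d =
    ((h.map (Int.castRingHom ℚ) : Polynomial ℚ) : PowerSeries ℚ) ∧ h.eval 1 ≠ 0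

/-- `regBound K I r` : there is a finite graded free resolution of `R/I` all of whose
generator degrees in homological degree `i` are at most `i + r`.  The minimal free
resolution realizes `r = reg(R/I)`, and the generator degrees of any graded free
resolution contain those of the minimal one, hence
`reg(R/I) = sInf {r | regBound K I r}`. -/
noncomputable def regBound (K : Type*) [Field K] {σ : Type*}
    (I : Ideal (MvPolynomial σ K)) (r : ℕ) : Prop :=
  ∃ (L : ℕ) (k : ℕ → ℕ) (d : (i : ℕ) → Fin (k i) → ℕ)
    (φ : (i : ℕ) → ((Fin (k (i + 1)) →₀ MvPolynomial σ K) →ₗ[MvPolynomial σ K]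
      (Fin (k i) →₀ MvPolynomial σ K)))
    (ε : (Fin (k 0) →₀ MvPolynomial σ K) →ₗ[MvPolynomial σ K] (MvPolynomial σ K ⧸ I)),
    (∀ i, L ≤ i → k i = 0) ∧
    (∀ (i : ℕ) (b : Fin (k (i + 1))) (a : Fin (k i)),
      (φ i (Finsupp.single b 1)) a ∈ homogeneousSubmodule σ K (d (i + 1) b - d i a) ∧
      (d (i + 1) b < d i a → (φ i (Finsupp.single b 1)) a = 0)) ∧
    (∀ a : Fin (k 0), ε (Finsupp.single a 1) ∈
      (homogeneousSubmodule σ K (d 0 a)).map (Ideal.Quotient.mkₐ K I).toLinearMap) ∧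
    Function.Surjective ε ∧
    LinearMap.range (φ 0) = LinearMap.ker ε ∧
    (∀ i : ℕ, LinearMap.range (φ (i + 1)) = LinearMap.ker (φ i)) ∧
    (∀ (i : ℕ) (a : Fin (k i)), d i a ≤ i + r)

/-- The Castelnuovo–Mumford regularity of `R/I`. -/
noncomputable def reg (K : Type*) [Field K] {σ : Type*}
    (I : Ideal (MvPolynomial σ K)) : ℕ :=
  sInf {r | regBound K I r}

namespace Stmt3Aux

variable {V : Type*}

lemma adj_ss {G : SimpleGraph V} {i j : V} {S : Set V} {a b : V} :
    (eSusp G i j S).Adj (some a) (some b) ↔ G.Adj a b := by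
  rw [eSusp, SimpleGraph.fromRel_adj]
  constructor
  · rintro ⟨hne, (⟨x, y, hx, hy, hadj⟩ | ⟨h, -⟩) | (⟨x, y, hx, hy, hadj⟩ | ⟨h, -⟩)⟩
    · obtain rfl : a = x := by injection hx
      obtain rfl : b = y := by injection hy
      exact hadj
    · simp at h
    · obtain rfl : b = x := by injection hx
      obtain rfl : a = y := by injection hy
      exact hadj.symm
    · simp at h
  · intro h
    exact ⟨by simpa using h.ne, Or.inl (Or.inl ⟨a, b, rfl, rfl, h⟩)⟩

lemma adj_ns {G : SimpleGraph V} {i j : V} {S : Set V} {y : V} :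
    (eSusp G i j S).Adj none (some y) ↔ y ∉ S ∧ y ≠ i ∧ y ≠ j := by
  rw [eSusp, SimpleGraph.fromRel_adj]
  constructor
  · rintro ⟨hne, (⟨x, y', hx, hy, hadj⟩ | ⟨-, y', hy, h⟩) | (⟨x, y', hx, hy, hadj⟩ | ⟨h, -⟩)⟩
    · simp at hx
    · obtain rfl : y = y' := by injection hy
      exact h
    · simp at hy
    · simp at h
  · rintro ⟨h1, h2, h3⟩
    exact ⟨by simp, Or.inl (Or.inr ⟨rfl, y, rfl, h1, h2, h3⟩)⟩

lemma edge_rep {G : SimpleGraph V} {i j : V} {S : Set V} {e : Sym2 (Option V)}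
    (he : e ∈ (eSusp G i j S).edgeSet) :
    (∃ a b, e = s(some a, some b) ∧ G.Adj a b) ∨
      (∃ y, e = s((none : Option V), some y) ∧ y ∉ S ∧ y ≠ i ∧ y ≠ j) := by
  revert he
  induction e using Sym2.ind with
  | _ a b =>
    intro he
    rw [SimpleGraph.mem_edgeSet] at he
    match a, b with
    | some a, some b => exact Or.inl ⟨a, b, rfl, adj_ss.mp he⟩
    | none, some y => exact Or.inr ⟨y, rfl, adj_ns.mp he⟩
    | some y, none => exact Or.inr ⟨y, Sym2.eq_swap.symm, adj_ns.mp he.symm⟩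
    | none, none => exact absurd he (SimpleGraph.irrefl _)

lemma map_some_edge {G : SimpleGraph V} (i j : V) (S : Set V) {e : Sym2 V}
    (he : e ∈ G.edgeSet) : Sym2.map some e ∈ (eSusp G i j S).edgeSet := by
  revert he
  induction e using Sym2.ind with
  | _ a b =>
    intro he
    rw [SimpleGraph.mem_edgeSet] at he
    simpa [SimpleGraph.mem_edgeSet, adj_ss] using he

lemma strip_spec {j : V} {e : Sym2 (Option V)} (h : (none : Option V) ∉ e) :
    Sym2.map some (Sym2.map (fun o => o.getD j) e) = e := by
  revert h
  induction e using Sym2.ind with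
  | _ a b =>
    intro h
    simp only [Sym2.mem_iff, not_or] at h
    match a, b with
    | some a, some b => simp
    | none, _ => exact absurd rfl h.1
    | some _, none => exact absurd rfl h.2

lemma adj_of_mem {G : SimpleGraph V} {e : Sym2 V} (he : e ∈ G.edgeSet)
    {v w : V} (hv : v ∈ e) (hw : w ∈ e) (hvw : v ≠ w) : G.Adj v w := by
  have : e = s(v, w) := (Sym2.mem_and_mem_iff hvw).mp ⟨hv, hw⟩
  rw [this, SimpleGraph.mem_edgeSet] at he
  exact he

/-- Lifting an induced matching of `G` to the suspension. -/
lemma lift [DecidableEq (Sym2 (Option V))] {G : SimpleGraph V} (i j : V) (S : Set V) {M : Finset (Sym2 V)}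
    (hM : IsInducedMatchingSet G M) :
    IsInducedMatchingSet (eSusp G i j S) (M.image (Sym2.map some)) := by
  obtain ⟨⟨hedge, hdisj⟩, hind⟩ := hM
  refine ⟨⟨?_, ?_⟩, ?_⟩
  · intro e he
    simp only [Finset.coe_image, Set.mem_image, Finset.mem_coe] at he
    obtain ⟨f, hf, rfl⟩ := he
    exact map_some_edge i j S (hedge hf)
  · intro e he f hf hne v hv hvf
    simp only [Finset.mem_image] at he hf
    obtain ⟨e₀, he₀, rfl⟩ := he
    obtain ⟨f₀, hf₀, rfl⟩ := hf
    have hne₀ : e₀ ≠ f₀ := by rintro rfl; exact hne rfl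
    rw [Sym2.mem_map] at hv hvf
    obtain ⟨a, ha, rfl⟩ := hv
    obtain ⟨b, hb, hba⟩ := hvf
    obtain rfl : b = a := by injection hba
    exact hdisj e₀ he₀ f₀ hf₀ hne₀ b ha hb
  · rintro e he f hf g hg hfg ⟨⟨v, hve, hvf⟩, ⟨w, hwe, hwg⟩⟩
    simp only [Finset.mem_image] at hf hg
    obtain ⟨f₀, hf₀, rfl⟩ := hf
    obtain ⟨g₀, hg₀, rfl⟩ := hg
    have hfg₀ : f₀ ≠ g₀ := by rintro rfl; exact hfg rfl
    rw [Sym2.mem_map] at hvf hwg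
    obtain ⟨v₀, hv₀, rfl⟩ := hvf
    obtain ⟨w₀, hw₀, rfl⟩ := hwg
    rcases edge_rep he with ⟨a, b, rfl, hab⟩ | ⟨y, rfl, -⟩
    · have hve' : v₀ = a ∨ v₀ = b := by
        rcases Sym2.mem_iff.mp hve with h | h
        · exact Or.inl (by injection h)
        · exact Or.inr (by injection h)
      have hwe' : w₀ = a ∨ w₀ = b := by
        rcases Sym2.mem_iff.mp hwe with h | h
        · exact Or.inl (by injection h)
        · exact Or.inr (by injection h)
      exact hind s(a, b) ((SimpleGraph.mem_edgeSet _).mpr hab) f₀ hf₀ g₀ hg₀ hfg₀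
        ⟨⟨v₀, Sym2.mem_iff.mpr hve', hv₀⟩, ⟨w₀, Sym2.mem_iff.mpr hwe', hw₀⟩⟩
    · have hv' : v₀ = y := by
        rcases Sym2.mem_iff.mp hve with h | h
        · simp at h
        · injection h
      have hw' : w₀ = y := by
        rcases Sym2.mem_iff.mp hwe with h | h
        · simp at h
        · injection h
      subst hv'
      exact hdisj f₀ hf₀ g₀ hg₀ hfg₀ v₀ hv₀ (hw' ▸ hw₀)

/-- Descending an induced matching of the suspension to one of `G` of the same size. -/
lemma descend {G : SimpleGraph V} {i j : V} (hij : G.Adj i j) {S : Set V}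
    (hS : ∀ x ∈ S, ∀ y ∈ S, ¬ G.Adj x y)
    (hSij : ∀ x ∈ S, ¬ G.Adj x i ∧ ¬ G.Adj x j)
    (hdom : ∀ x : V, x ∉ S → x ≠ i → x ≠ j →
      ∃ y, (y ∈ S ∨ y = i ∨ y = j) ∧ G.Adj x y)
    {M' : Finset (Sym2 (Option V))}
    (hM' : IsInducedMatchingSet (eSusp G i j S) M') :
    ∃ M : Finset (Sym2 V), IsInducedMatchingSet G M ∧ M.card = M'.card := by
  classical
  obtain ⟨⟨hedge, hdisj⟩, hind⟩ := hM'
  have iS : i ∉ S := fun hi => (hSij i hi).2 hij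
  have jS : j ∉ S := fun hj => (hSij j hj).1 hij.symm
  by_cases hnone : ∃ e₀ ∈ M', (none : Option V) ∈ e₀
  · -- there is an edge using the new vertex
    obtain ⟨e₀, he₀, hne₀⟩ := hnone
    obtain ⟨y, he₀y, hyS, hyi, hyj⟩ :
        ∃ y, e₀ = s((none : Option V), some y) ∧ y ∉ S ∧ y ≠ i ∧ y ≠ j := by
      rcases edge_rep (hedge he₀) with ⟨a, b, rfl, -⟩ | ⟨y, rfl, h1, h2, h3⟩
      · simp [Sym2.mem_iff] at hne₀
      · exact ⟨y, rfl, h1, h2, h3⟩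
    subst he₀y
    have hymem : some y ∈ s((none : Option V), some y) := by simp
    have hK : ∀ f ∈ M', f ≠ s((none : Option V), some y) → ∀ u : V, some u ∈ f →
        u ∈ S ∨ u = i ∨ u = j := by
      intro f hf hne u hu
      by_contra hc
      push_neg at hc
      obtain ⟨hus, hui, huj⟩ := hc
      have hed : s((none : Option V), some u) ∈ (eSusp G i j S).edgeSet :=
        (SimpleGraph.mem_edgeSet _).mpr (adj_ns.mpr ⟨hus, hui, huj⟩)
      exact hind _ hed _ he₀ f hf (Ne.symm hne)
        ⟨⟨none, by simp, by simp⟩, ⟨some u, by simp, hu⟩⟩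
    have hK2 : ∀ f ∈ M', f ≠ s((none : Option V), some y) →
        f = s(some i, some j) := by
      intro f hf hne
      have hnf : (none : Option V) ∉ f := fun h =>
        hdisj _ he₀ f hf (Ne.symm hne) none (by simp) h
      rcases edge_rep (hedge hf) with ⟨a, b, rfl, hab⟩ | ⟨y', rfl, -⟩
      · have ha := hK _ hf hne a (by simp)
        have hb := hK _ hf hne b (by simp)
        rcases ha with ha | rfl | rfl <;> rcases hb with hb | rfl | rfl
        · exact absurd hab (hS a ha b hb)
        · exact absurd hab ((hSij a ha).1)
        · exact absurd hab ((hSij a ha).2)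
        · exact absurd hab.symm ((hSij b hb).1)
        · exact absurd hab (G.irrefl)
        · rfl
        · exact absurd hab.symm ((hSij b hb).2)
        · exact Sym2.eq_swap
        · exact absurd hab (G.irrefl)
      · exact absurd (by simp : (none : Option V) ∈ _) hnf
    by_cases hc : s((some i : Option V), some j) ∈ M'
    · -- M' = {e₀, {i,j}}
      have hne' : s((none : Option V), some y) ≠ s((some i : Option V), some j) := by
        intro h
        have : (none : Option V) ∈ s((some i : Option V), some j) := h ▸ (by simp)
        simp at this
      have hK3 : ∀ w, G.Adj y w → w ≠ i ∧ w ≠ j := by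
        intro w hw
        constructor <;> rintro rfl <;>
          exact hind s(some y, some w) ((SimpleGraph.mem_edgeSet _).mpr (adj_ss.mpr hw))
            _ he₀ _ hc hne'
            ⟨⟨some y, by simp, by simp⟩, ⟨some w, by simp, by simp [Sym2.mem_iff]⟩⟩
      obtain ⟨z, hzmem, hyz⟩ := hdom y hyS hyi hyj
      have hz : z ∈ S := by
        rcases hzmem with hz | rfl | rfl
        · exact hz
        · exact absurd rfl (hK3 _ hyz).1
        · exact absurd rfl (hK3 _ hyz).2
      have hzi : z ≠ i := fun h => iS (h ▸ hz)
      have hzj : z ≠ j := fun h => jS (h ▸ hz)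
      have hM'eq : M' = {s((none : Option V), some y), s((some i : Option V), some j)} := by
        ext f
        simp only [Finset.mem_insert, Finset.mem_singleton]
        constructor
        · intro hf
          by_cases h : f = s((none : Option V), some y)
          · exact Or.inl h
          · exact Or.inr (hK2 f hf h)
        · rintro (rfl | rfl)
          · exact he₀
          · exact hc
      have hcard' : M'.card = 2 := by
        rw [hM'eq]
        exact Finset.card_pair hne'
      refine ⟨{s(i, j), s(y, z)}, ⟨⟨?_, ?_⟩, ?_⟩, ?_⟩
      · intro e he
        simp only [Finset.coe_insert, Set.mem_insert_iff, Finset.coe_singleton,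
          Set.mem_singleton_iff] at he
        rcases he with rfl | rfl
        · exact (SimpleGraph.mem_edgeSet _).mpr hij
        · exact (SimpleGraph.mem_edgeSet _).mpr hyz
      · have key : ∀ v, v ∈ s(i, j) → v ∉ s(y, z) := by
          intro v hv hv'
          rcases Sym2.mem_iff.mp hv with rfl | rfl <;>
            rcases Sym2.mem_iff.mp hv' with h | h
          · exact hyi h.symm
          · exact hzi h.symm
          · exact hyj h.symm
          · exact hzj h.symm
        intro e he f hf hef v hv hvf
        simp only [Finset.mem_insert, Finset.mem_singleton] at he hf
        rcases he with rfl | rfl <;> rcases hf with rfl | rfl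
        · exact hef rfl
        · exact key v hv hvf
        · exact key v hvf hv
        · exact hef rfl
      · have key : ∀ (e : Sym2 V), e ∈ G.edgeSet → ∀ v w, v ∈ e → w ∈ e →
            v ∈ s(i, j) → w ∈ s(y, z) → False := by
          intro e he v w hve hwe hvij hwyz
          have hvw : v ≠ w := by
            rintro rfl
            rcases Sym2.mem_iff.mp hvij with rfl | rfl <;>
              rcases Sym2.mem_iff.mp hwyz with h | h
            · exact hyi h.symm
            · exact hzi h.symm
            · exact hyj h.symm
            · exact hzj h.symm
          have hadj : G.Adj v w := adj_of_mem he hve hwe hvw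
          rcases Sym2.mem_iff.mp hwyz with rfl | rfl
          · rcases Sym2.mem_iff.mp hvij with rfl | rfl
            · exact (hK3 v hadj.symm).1 rfl
            · exact (hK3 v hadj.symm).2 rfl
          · rcases Sym2.mem_iff.mp hvij with rfl | rfl
            · exact (hSij w hz).1 hadj.symm
            · exact (hSij w hz).2 hadj.symm
        rintro e he f hf g hg hfg ⟨⟨v, hve, hvf⟩, ⟨w, hwe, hwg⟩⟩
        simp only [Finset.mem_insert, Finset.mem_singleton] at hf hg
        rcases hf with rfl | rfl <;> rcases hg with rfl | rfl
        · exact hfg rfl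
        · exact key e he v w hve hwe hvf hwg
        · exact key e he w v hwe hve hwg hvf
        · exact hfg rfl
      · rw [hcard']
        refine Finset.card_pair ?_
        intro h
        rw [Sym2.eq_iff] at h
        rcases h with ⟨rfl, -⟩ | ⟨-, rfl⟩
        · exact hyi rfl
        · exact hyj rfl
    · -- M' = {e₀}
      have hM'eq : M' = {s((none : Option V), some y)} := by
        ext f
        simp only [Finset.mem_singleton]
        constructor
        · intro hf
          by_contra h
          exact hc (hK2 f hf h ▸ hK2 f hf h ▸ (hK2 f hf h ▸ hf))
        · rintro rfl; exact he₀
      refine ⟨{s(i, j)}, ⟨⟨?_, ?_⟩, ?_⟩, ?_⟩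
      · intro e he
        simp only [Finset.coe_singleton, Set.mem_singleton_iff] at he
        subst he
        exact (SimpleGraph.mem_edgeSet _).mpr hij
      · intro e he f hf hef
        simp only [Finset.mem_singleton] at he hf
        exact absurd (he.trans hf.symm) hef
      · rintro e he f hf g hg hfg -
        simp only [Finset.mem_singleton] at hf hg
        exact hfg (hf.trans hg.symm)
      · rw [hM'eq]
        simp
  · -- no edge uses the new vertex: strip `some`
    push_neg at hnone
    have hrep : ∀ f ∈ M', ∃ a b, f = s(some a, some b) ∧ G.Adj a b := by
      intro f hf
      rcases edge_rep (hedge hf) with ⟨a, b, rfl, hab⟩ | ⟨y, rfl, -⟩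
      · exact ⟨a, b, rfl, hab⟩
      · exact absurd (by simp : (none : Option V) ∈ _) (hnone _ hf)
    have hrecover : ∀ f ∈ M', Sym2.map some (Sym2.map (fun o => o.getD j) f) = f :=
      fun f hf => strip_spec (hnone f hf)
    have hmemstrip : ∀ f ∈ M', ∀ v : V, v ∈ Sym2.map (fun o => o.getD j) f →
        some v ∈ f := by
      intro f hf v hv
      obtain ⟨a, b, rfl, -⟩ := hrep f hf
      simp only [Sym2.map_pair_eq, Option.getD_some, Sym2.mem_iff] at hv
      rcases hv with rfl | rfl <;> simp
    refine ⟨M'.image (Sym2.map (fun o => o.getD j)), ⟨⟨?_, ?_⟩, ?_⟩, ?_⟩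
    · intro e he
      simp only [Finset.coe_image, Set.mem_image, Finset.mem_coe] at he
      obtain ⟨f, hf, rfl⟩ := he
      obtain ⟨a, b, rfl, hab⟩ := hrep f hf
      simpa [SimpleGraph.mem_edgeSet] using hab
    · intro e he f hf hef v hv hvf
      simp only [Finset.mem_image] at he hf
      obtain ⟨e₀, he₀, rfl⟩ := he
      obtain ⟨f₀, hf₀, rfl⟩ := hf
      have hne₀ : e₀ ≠ f₀ := by rintro rfl; exact hef rfl
      exact hdisj e₀ he₀ f₀ hf₀ hne₀ (some v) (hmemstrip _ he₀ v hv)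
        (hmemstrip _ hf₀ v hvf)
    · rintro e he f hf g hg hfg ⟨⟨v, hve, hvf⟩, ⟨w, hwe, hwg⟩⟩
      simp only [Finset.mem_image] at hf hg
      obtain ⟨f₀, hf₀, rfl⟩ := hf
      obtain ⟨g₀, hg₀, rfl⟩ := hg
      have hfg₀ : f₀ ≠ g₀ := by rintro rfl; exact hfg rfl
      exact hind (Sym2.map some e) (map_some_edge i j S he) f₀ hf₀ g₀ hg₀ hfg₀
        ⟨⟨some v, Sym2.mem_map.mpr ⟨v, hve, rfl⟩, hmemstrip _ hf₀ v hvf⟩,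
         ⟨some w, Sym2.mem_map.mpr ⟨w, hwe, rfl⟩, hmemstrip _ hg₀ w hwg⟩⟩
    · refine Finset.card_image_of_injOn ?_
      intro f hf g hg h
      rw [← hrecover f hf, ← hrecover g hg, h]

end Stmt3Aux

/-- induced matching number of the `{x_i,x_j}, S`-suspension. -/
theorem stmt_3 {V : Type*} [Fintype V] (G : SimpleGraph V)
    (hiso : ∀ v : V, ∃ w, G.Adj v w) (i j : V) (hij : G.Adj i j) (S : Set V)
    (hS : ∀ x ∈ S, ∀ y ∈ S, ¬ G.Adj x y)
    (hSij : ∀ x ∈ S, ¬ G.Adj x i ∧ ¬ G.Adj x j)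
    (hdom : ∀ x : V, x ∉ S → x ≠ i → x ≠ j →
      ∃ y, (y ∈ S ∨ y = i ∨ y = j) ∧ G.Adj x y) :
    indMatchNum (eSusp G i j S) = indMatchNum G := by
  classical
  unfold indMatchNum
  congr 1
  ext k
  simp only [Set.mem_setOf_eq]
  constructor
  · rintro ⟨M', hM', rfl⟩
    obtain ⟨M, hM, hcard⟩ := Stmt3Aux.descend hij hS hSij hdom hM'
    exact ⟨M, hM, hcard⟩
  · rintro ⟨M, hM, rfl⟩
    exact ⟨M.image (Sym2.map some), Stmt3Aux.lift i j S hM,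
      Finset.card_image_of_injective _ (Sym2.map.injective (Option.some_injective V))⟩
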